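/- Let f : ℂ² → ℂ be an entire function (analytic on all of ℂ²) with f(0,0) = 0. Then there exists a point z in the topological boundary ∂𝔻̄² of the closed unit bidisk with f(z) = 0. -/

import Mathlib

open Metric Set

def bidisk : Set (ℂ × ℂ) := {z : ℂ × ℂ | ‖z.1‖ ≤ 1 ∧ ‖z.2‖ ≤ 1}

/-- Let `f : ℂ² → ℂ` be an entire function with `f (0,0) = 0`. Then there exists a point
`z` in the topological boundary of the closed unit bidisk with `f z = 0`. -/
theorem stmt5 (f : ℂ × ℂ → ℂ) (hf : ∀ z : ℂ × ℂ, AnalyticAt ℂ f z)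
    (h0 : f ((0 : ℂ), (0 : ℂ)) = 0) :
    ∃ z ∈ frontier bidisk, f z = 0 := by
  by_contra hcon
  push_neg at hcon
  have hcont : Continuous f := continuous_iff_continuousAt.2 fun z => (hf z).continuousAt
  have hbid : bidisk = closedBall (0:ℂ) 1 ×ˢ closedBall (0:ℂ) 1 := by
    ext p
    simp [bidisk, Set.mem_prod, mem_closedBall, Complex.dist_eq, sub_zero]
  have hfr : frontier bidisk =
      (closedBall (0:ℂ) 1 ×ˢ sphere (0:ℂ) 1) ∪ (sphere (0:ℂ) 1 ×ˢ closedBall (0:ℂ) 1) := by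
    rw [hbid, frontier_prod_eq, closure_closedBall, frontier_closedBall _ one_ne_zero]
  have hmem1 : ∀ p : ℂ × ℂ, ‖p.1‖ ≤ 1 → ‖p.2‖ = 1 → p ∈ frontier bidisk := by
    intro p h1 h2
    rw [hfr]
    exact Or.inl ⟨by simpa [mem_closedBall_zero_iff] using h1,
      by simpa [mem_sphere_zero_iff_norm] using h2⟩
  have hmem2 : ∀ p : ℂ × ℂ, ‖p.1‖ = 1 → ‖p.2‖ ≤ 1 → p ∈ frontier bidisk := by
    intro p h1 h2
    rw [hfr]
    exact Or.inr ⟨by simpa [mem_sphere_zero_iff_norm] using h1,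
      by simpa [mem_closedBall_zero_iff] using h2⟩
  -- compactness of bidisk and its frontier
  have hKbid : IsCompact bidisk := by
    rw [hbid]; exact (isCompact_closedBall _ _).prod (isCompact_closedBall _ _)
  have hKfr : IsCompact (frontier bidisk) := by
    rw [hfr]
    exact ((isCompact_closedBall _ _).prod (isCompact_sphere _ _)).union
      ((isCompact_sphere _ _).prod (isCompact_closedBall _ _))
  have hfrne : (frontier bidisk).Nonempty :=
    ⟨((1:ℂ), (0:ℂ)), hmem2 _ (by simp) (by simp)⟩
  obtain ⟨p₀, hp₀, hminOn⟩ := hKfr.exists_isMinOn hfrne hcont.norm.continuousOn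
  set m : ℝ := ‖f p₀‖ with hm_def
  have hm : 0 < m := norm_pos_iff.2 (hcon p₀ hp₀)
  have hmin : ∀ p ∈ frontier bidisk, m ≤ ‖f p‖ := fun p hp => hminOn hp
  -- the two sets
  set A : Set ℂ := Prod.fst '' (bidisk ∩ f ⁻¹' {0}) with hA_def
  set B : Set ℂ := closedBall (0:ℂ) 1 ∩ ⋂ w ∈ closedBall (0:ℂ) 1, {z : ℂ | m ≤ ‖f (z, w)‖}
    with hB_def
  have hAc : IsCompact A :=
    (hKbid.inter_right (isClosed_singleton.preimage hcont)).image continuous_fst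
  have hBc : IsClosed B := by
    refine IsClosed.inter Metric.isClosed_closedBall (isClosed_biInter fun w _ => ?_)
    exact isClosed_le continuous_const (hcont.comp (continuous_id.prodMk continuous_const)).norm
  -- slice analyticity
  have hga : ∀ z w : ℂ, AnalyticAt ℂ (fun w : ℂ => f (z, w)) w := by
    intro z w
    exact (hf (z, w)).comp (analyticAt_const.prod (analyticAt_id))
  -- A and B cover the closed disk
  have hcover : ∀ z ∈ closedBall (0:ℂ) 1, z ∈ A ∨ z ∈ B := by
    intro z hz
    by_cases h : ∃ w ∈ closedBall (0:ℂ) 1, f (z, w) = 0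
    · obtain ⟨w, hw, hfw⟩ := h
      exact Or.inl ⟨(z, w), ⟨⟨by simpa [mem_closedBall_zero_iff] using hz,
        by simpa [mem_closedBall_zero_iff] using hw⟩, hfw⟩, rfl⟩
    · push_neg at h
      refine Or.inr ⟨hz, mem_biInter fun w hw => ?_⟩
      -- minimum modulus principle via 1/f
      set g : ℂ → ℂ := fun w => (f (z, w))⁻¹ with hg_def
      have hd : DiffContOnCl ℂ g (ball (0:ℂ) 1) := by
        constructor
        · intro w hw
          exact (((hga z w).differentiableAt).inv
            (h w (ball_subset_closedBall hw))).differentiableWithinAt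
        · rw [closure_ball _ one_ne_zero]
          intro w hw
          exact (((hga z w).continuousAt).inv₀ (h w hw)).continuousWithinAt
      have hb : ∀ w ∈ frontier (ball (0:ℂ) 1), ‖g w‖ ≤ m⁻¹ := by
        intro w hw
        rw [frontier_ball _ one_ne_zero, mem_sphere_zero_iff_norm] at hw
        have hfb : m ≤ ‖f (z, w)‖ :=
          hmin _ (hmem1 (z, w) (by simpa [mem_closedBall_zero_iff] using hz) hw)
        rw [hg_def]
        simp only [norm_inv]
        exact inv_anti₀ hm hfb
      have hle : ‖g w‖ ≤ m⁻¹ := by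
        refine Complex.norm_le_of_forall_mem_frontier_norm_le isBounded_ball hd hb ?_
        rw [closure_ball _ one_ne_zero]; exact hw
      have hfw : f (z, w) ≠ 0 := h w hw
      rw [hg_def] at hle
      simp only [norm_inv] at hle
      have := (inv_le_inv₀ (norm_pos_iff.2 hfw) hm).1 hle
      exact this
  -- disjointness
  have hdisj : ∀ z, z ∈ A → z ∈ B → False := by
    intro z hzA hzB
    obtain ⟨p, ⟨hpbid, hpz⟩, hp1⟩ := hzA
    have h1 : p.2 ∈ closedBall (0:ℂ) 1 := by
      simpa [mem_closedBall_zero_iff] using hpbid.2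
    have h2 : m ≤ ‖f (z, p.2)‖ := by
      have := hzB.2
      rw [mem_iInter₂] at this
      exact this p.2 h1
    rw [← hp1] at h2
    simp only [Prod.mk.eta] at h2
    rw [show f p = 0 from hpz] at h2
    simp at h2
    exact absurd h2 (not_le.2 hm)
  -- connectedness
  have hpc : IsPreconnected (closedBall (0:ℂ) 1) := (convex_closedBall _ _).isPreconnected
  have hsub : closedBall (0:ℂ) 1 ⊆ A := by
    by_contra hns
    rw [Set.not_subset] at hns
    obtain ⟨z, hz, hzA⟩ := hns
    have h0A : (0:ℂ) ∈ A := ⟨((0:ℂ), (0:ℂ)), ⟨⟨by simp, by simp⟩, h0⟩, rfl⟩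
    have h0B : (0:ℂ) ∉ B := fun hB => hdisj 0 h0A hB
    obtain ⟨y, hy, hyA, hyB⟩ := hpc Aᶜ Bᶜ hAc.isClosed.isOpen_compl hBc.isOpen_compl
      (fun x hx => by rcases hcover x hx with h | h
                      · exact Or.inr fun hB => hdisj x h hB
                      · exact Or.inl fun hA => hdisj x hA h)
      ⟨z, hz, hzA⟩ ⟨0, by simp, h0B⟩
    rcases hcover y hy with h | h
    · exact hyA h
    · exact hyB h
  have h1A : (1:ℂ) ∈ A := hsub (by simp)
  obtain ⟨p, ⟨hpbid, hpz⟩, hp1⟩ := h1A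
  refine hcon p (hmem2 p ?_ hpbid.2) hpz
  rw [hp1]; simp
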